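/- Let n, k, δ be positive integers with δ < k < n and n ≥ k + δ − 1, let p be a prime, N ≥ 2^{n+k+δ−1}, and let α be a primitive element of the finite field F_{p^N}. Let 𝒢 ∈ F_{p^N}^{n×(k+δ)} be the matrix with entry α^{2^{i+j}} in row i and column j for 0 ≤ i ≤ n−1, 0 ≤ j ≤ k+δ−1. Then 𝒢 is superregular; moreover, writing its columns in order as g_{0,1}, g_{1,1}, …, g_{0,δ}, g_{1,δ}, g_{0,δ+1}, …, g_{0,k} and setting G(z) = G_0 + G_1 z with G_i = [g_{i,1} … g_{i,k}] (with g_{1,r} = 0 for r > δ), G(z) is the generator matrix of an MDS convolutional code of rate k/n and degree δ over F_{p^N}, i.e., Im_{F[z]} G(z) has degree δ and free distance n − k + δ + 1. -/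

import Mathlib

open Matrix Polynomial Finset

/-- A matrix over a field is superregular if every minor is nonzero. -/
def Superregular {F : Type*} [Field F] {r ℓ : ℕ} (A : Matrix (Fin r) (Fin ℓ) F) : Prop :=
  ∀ (s : ℕ) (f : Fin s → Fin r) (g : Fin s → Fin ℓ),
    StrictMono f → StrictMono g → (A.submatrix f g).det ≠ 0

/-- The maximal degree of the `k × k` minors of a polynomial matrix `G`. -/
noncomputable def maxMinorDeg {F : Type*} [Field F] {n k : ℕ}
    (G : Matrix (Fin n) (Fin k) (Polynomial F)) : ℕ :=
  Finset.univ.sup fun f : Fin k → Fin n => ((G.submatrix f id).det).natDegree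

/-- The weight of a polynomial vector: the total number of nonzero coefficients. -/
def polyWeight {F : Type*} [Field F] {n : ℕ} (v : Fin n → Polynomial F) : ℕ :=
  ∑ x : Fin n, (v x).support.card

/-- The free distance of the convolutional code generated by `G`: the minimal weight of a
nonzero codeword of `Im_{F[z]} G(z)`. -/
noncomputable def freeDist {F : Type*} [Field F] {n k : ℕ}
    (G : Matrix (Fin n) (Fin k) (Polynomial F)) : ℕ :=
  sInf {w : ℕ | ∃ u : Fin k → Polynomial F, G.mulVec u ≠ 0 ∧ w = polyWeight (G.mulVec u)}




lemma two_pow_cross {a a' b b' : ℕ} (ha : a < a') (hb : b < b') :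
    2 ^ (a' + b) + 2 ^ (a + b') < 2 ^ (a + b) + 2 ^ (a' + b') := by
  have h1 : 2 ^ (a' + b) ≤ 2 ^ (a' + b' - 1) := Nat.pow_le_pow_right (by norm_num) (by omega)
  have h2 : 2 ^ (a + b') ≤ 2 ^ (a' + b' - 1) := Nat.pow_le_pow_right (by norm_num) (by omega)
  have h3 : 2 ^ (a' + b' - 1) + 2 ^ (a' + b' - 1) = 2 ^ (a' + b') := by
    rw [← two_mul, ← pow_succ']
    congr 1
    omega
  have h4 : 0 < 2 ^ (a + b) := by positivity
  omega

section Rearrange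

variable {s : ℕ} (A B : Fin s → ℕ)

/-- The exponent sum associated to a permutation. -/
def permExp (σ : Equiv.Perm (Fin s)) : ℕ := ∑ i, 2 ^ (A (σ i) + B i)

lemma perm_step (hA : StrictMono A) (hB : StrictMono B) (σ : Equiv.Perm (Fin s))
    (hσ : σ ≠ 1) :
    ∃ σ' : Equiv.Perm (Fin s), σ'.support.card < σ.support.card ∧
      permExp A B σ < permExp A B σ' := by
  have hne : σ.support.Nonempty := by
    rw [Finset.nonempty_iff_ne_empty]
    simpa [Equiv.Perm.support_eq_empty_iff] using hσ
  set t := σ.support.max' hne with htdef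
  have htmem : t ∈ σ.support := σ.support.max'_mem hne
  have ht : σ t ≠ t := Equiv.Perm.mem_support.mp htmem
  have hσtmem : σ t ∈ σ.support := Equiv.Perm.apply_mem_support.mpr htmem
  have hσtlt : σ t < t := lt_of_le_of_ne (σ.support.le_max' _ hσtmem) ht
  set u := σ⁻¹ t with hudef
  have hut : σ u = t := σ.apply_symm_apply t
  have hune : u ≠ t := by
    intro h
    rw [h] at hut
    exact ht hut
  have humem : u ∈ σ.support := by
    rw [Equiv.Perm.mem_support, hut]
    exact fun h => hune h.symm
  have hult : u < t := lt_of_le_of_ne (σ.support.le_max' _ humem) hune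
  refine ⟨σ * Equiv.swap u t, ?_, ?_⟩
  · have hsub : (σ * Equiv.swap u t).support ⊆ σ.support.erase t := by
      intro x hx
      rw [Finset.mem_erase]
      have hx' := Equiv.Perm.mem_support.mp hx
      constructor
      · intro h
        apply hx'
        rw [h, Equiv.Perm.mul_apply, Equiv.swap_apply_right, hut]
      · rcases eq_or_ne x u with rfl | hxu
        · exact humem
        · rcases eq_or_ne x t with rfl | hxt
          · exact htmem
          · rw [Equiv.Perm.mul_apply, Equiv.swap_apply_of_ne_of_ne hxu hxt] at hx'
            exact Equiv.Perm.mem_support.mpr hx'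
    calc (σ * Equiv.swap u t).support.card ≤ (σ.support.erase t).card :=
          Finset.card_le_card hsub
      _ < σ.support.card := Finset.card_erase_lt_of_mem htmem
  · unfold permExp
    have htu : t ∈ (Finset.univ.erase u) := Finset.mem_erase.mpr ⟨fun h => hune h.symm, Finset.mem_univ _⟩
    have split : ∀ τ : Equiv.Perm (Fin s), ∑ i, 2 ^ (A (τ i) + B i) =
        2 ^ (A (τ u) + B u) + (2 ^ (A (τ t) + B t) +
          ∑ i ∈ (Finset.univ.erase u).erase t, 2 ^ (A (τ i) + B i)) := by
      intro τ
      rw [← Finset.add_sum_erase _ _ (Finset.mem_univ u), ← Finset.add_sum_erase _ _ htu]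
    rw [split σ, split (σ * Equiv.swap u t)]
    have heq : ∀ i ∈ (Finset.univ.erase u).erase t,
        2 ^ (A ((σ * Equiv.swap u t) i) + B i) = 2 ^ (A (σ i) + B i) := by
      intro i hi
      rw [Finset.mem_erase] at hi
      obtain ⟨hit, hiu⟩ := hi
      rw [Finset.mem_erase] at hiu
      rw [Equiv.Perm.mul_apply, Equiv.swap_apply_of_ne_of_ne hiu.1 hit]
    rw [Finset.sum_congr rfl heq]
    have e1 : (σ * Equiv.swap u t) u = σ t := by
      rw [Equiv.Perm.mul_apply, Equiv.swap_apply_left]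
    have e2 : (σ * Equiv.swap u t) t = t := by
      rw [Equiv.Perm.mul_apply, Equiv.swap_apply_right, hut]
    rw [e1, e2, hut]
    have := two_pow_cross (hA hσtlt) (hB hult)
    omega

lemma perm_le (hA : StrictMono A) (hB : StrictMono B) :
    ∀ (m : ℕ) (σ : Equiv.Perm (Fin s)), σ.support.card ≤ m →
      permExp A B σ ≤ permExp A B 1 := by
  intro m
  induction m with
  | zero =>
    intro σ hσ
    have : σ = 1 := by
      rw [← Equiv.Perm.support_eq_empty_iff, ← Finset.card_eq_zero]
      omega
    rw [this]
  | succ m ih =>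
    intro σ hσ
    rcases eq_or_ne σ 1 with rfl | h1
    · rfl
    · obtain ⟨σ', hcard, hlt⟩ := perm_step A B hA hB σ h1
      exact le_of_lt (lt_of_lt_of_le hlt (ih σ' (by omega)))

lemma perm_lt (hA : StrictMono A) (hB : StrictMono B) (σ : Equiv.Perm (Fin s))
    (hσ : σ ≠ 1) : permExp A B σ < permExp A B 1 := by
  obtain ⟨σ', hcard, hlt⟩ := perm_step A B hA hB σ hσ
  exact lt_of_lt_of_le hlt (perm_le A B hA hB σ'.support.card σ' le_rfl)

end Rearrange


lemma primitive_int_coeffs {F : Type*} [Field F] [Fintype F] {p N : ℕ}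
    (hp : p.Prime) (hN0 : N ≠ 0) (hcard : Fintype.card F = p ^ N)
    (α : F) (hα : orderOf α = p ^ N - 1) :
    ∀ c : Fin N → ℤ, (∑ e : Fin N, (c e : F) * α ^ (e : ℕ)) = 0 → ∀ e, (p : ℤ) ∣ c e := by
  haveI : Fact p.Prime := ⟨hp⟩
  -- characteristic of F is p
  have hq := ringChar.charP F
  have hqpr : (ringChar F).Prime := CharP.char_is_prime F _
  obtain ⟨m, hm⟩ := FiniteField.card F (ringChar F)
  have hqp : ringChar F = p := by
    have : ringChar F ∣ p ^ N := by
      rw [← hcard, hm.2]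
      exact dvd_pow_self _ (by positivity)
    exact (Nat.prime_dvd_prime_iff_eq hqpr hp).mp (hqpr.dvd_of_dvd_pow this)
  haveI : CharP F p := by rwa [hqp] at hq
  letI : Algebra (ZMod p) F := ZMod.algebra F p
  haveI : FiniteDimensional (ZMod p) F := Module.Finite.of_finite
  -- finrank = N
  have hrank : Module.finrank (ZMod p) F = N := by
    have h1 : Fintype.card F = p ^ Module.finrank (ZMod p) F := by
      rw [Module.card_eq_pow_finrank (K := ZMod p) (V := F), ZMod.card]
    rw [hcard] at h1
    exact (Nat.pow_right_injective hp.two_le h1.symm)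
  -- α ≠ 0
  have hord : orderOf α ≠ 0 := by
    rw [hα]
    have : 2 ≤ p ^ N := by
      calc 2 = 2 ^ 1 := rfl
      _ ≤ p ^ N := Nat.pow_le_pow_left hp.two_le N |>.trans' (by
        exact Nat.pow_le_pow_right (by norm_num) (by omega))
    omega
  have hα0 : α ≠ 0 := by
    intro h
    have h1 := pow_orderOf_eq_one α
    rw [h] at h1 hord
    rw [zero_pow hord] at h1
    exact zero_ne_one h1
  -- α generates the unit group
  set a : Fˣ := Units.mk0 α hα0 with hadef
  have haord : orderOf a = Nat.card Fˣ := by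
    rw [Nat.card_units, Nat.card_eq_fintype_card, hcard, ← hα, ← orderOf_units]
    rfl
  have hgen : ∀ x : Fˣ, x ∈ Subgroup.zpowers a := by
    have : Subgroup.zpowers a = ⊤ := by
      apply Subgroup.eq_top_of_card_eq
      rw [Nat.card_zpowers, haord]
    intro x
    rw [this]
    trivial
  -- adjoin α = ⊤
  have htop : IntermediateField.adjoin (ZMod p) {α} = ⊤ := by
    rw [eq_top_iff]
    intro x _
    rcases eq_or_ne x 0 with rfl | hx0
    · exact zero_mem _
    · obtain ⟨m, hm'⟩ := mem_powers_iff_mem_zpowers.mpr (hgen (Units.mk0 x hx0))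
      have hxm : α ^ m = x := by
        have := congrArg (Units.val) hm'
        simpa [hadef] using this
      rw [← hxm]
      exact pow_mem (IntermediateField.mem_adjoin_simple_self (ZMod p) α) m
  have hint : IsIntegral (ZMod p) α := IsIntegral.of_finite _ _
  have hdeg : (minpoly (ZMod p) α).natDegree = N := by
    rw [← IntermediateField.adjoin.finrank hint, htop]
    rw [IntermediateField.finrank_top', hrank]
  have hli : LinearIndependent (ZMod p) fun i : Fin N => α ^ (i : ℕ) := by
    have := linearIndependent_pow (K := ZMod p) α
    rwa [hdeg] at this
  intro c hc e
  have key := Fintype.linearIndependent_iff.mp hli (fun e => ((c e : ZMod p)))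
  have hsum : ∑ e : Fin N, ((c e : ZMod p)) • α ^ (e : ℕ) = 0 := by
    rw [← hc]
    apply Finset.sum_congr rfl
    intro e _
    rw [Algebra.smul_def, map_intCast]
  have := key hsum e
  exact (ZMod.intCast_zmod_eq_zero_iff_dvd _ _).mp this


lemma sum_range_two_pow (n : ℕ) : ∑ i ∈ Finset.range n, 2 ^ i + 1 = 2 ^ n := by
  induction n with
  | zero => simp
  | succ n ih => rw [Finset.sum_range_succ, pow_succ]; omega

lemma superregular_𝒢 {F : Type*} [Field F] [Fintype F]
    {n k δ p N : ℕ} (hδ : 0 < δ)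
    (hp : p.Prime) (hcard : Fintype.card F = p ^ N)
    (hN : N ≥ 2 ^ (n + k + δ - 1))
    (α : F) (hα : orderOf α = p ^ N - 1)
    (𝒢 : Matrix (Fin n) (Fin (k + δ)) F)
    (h𝒢 : ∀ (x : Fin n) (c₀ : Fin (k + δ)),
      𝒢 x c₀ = α ^ 2 ^ ((x : ℕ) + (c₀ : ℕ))) : Superregular 𝒢 := by
  have hN0 : N ≠ 0 := by
    have := Nat.one_le_two_pow (n := n + k + δ - 1)
    omega
  intro s f g hf hg hdet0
  set A : Fin s → ℕ := fun i => ((f i : ℕ)) with hA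
  set B : Fin s → ℕ := fun i => ((g i : ℕ)) with hB
  have hAm : StrictMono A := fun i j hij => hf hij
  have hBm : StrictMono B := fun i j hij => hg hij
  have hEσ : ∀ σ : Equiv.Perm (Fin s), permExp A B σ < N := by
    intro σ
    have h1 : permExp A B σ ≤ (∑ i, 2 ^ (A (σ i))) * 2 ^ (k + δ - 1) := by
      rw [Finset.sum_mul]
      apply Finset.sum_le_sum
      intro i _
      rw [← pow_add]
      apply Nat.pow_le_pow_right (by norm_num)
      have := (g i).isLt
      simp only [hA, hB]
      omega
    have hinj : ∀ a ∈ (Finset.univ : Finset (Fin s)), ∀ b ∈ Finset.univ,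
        A (σ a) = A (σ b) → a = b := by
      intro a _ b _ hab
      exact σ.injective (hf.injective (Fin.ext hab))
    have h2 : (∑ i, 2 ^ (A (σ i))) ≤ 2 ^ n - 1 := by
      rw [show (∑ i, 2 ^ (A (σ i))) = ∑ x ∈ Finset.univ.image (fun i => A (σ i)), 2 ^ x from
        (Finset.sum_image hinj).symm]
      have hsub : (Finset.univ.image fun i : Fin s => A (σ i)) ⊆ Finset.range n := by
        intro x hx
        simp only [Finset.mem_image] at hx
        obtain ⟨i, _, rfl⟩ := hx
        exact Finset.mem_range.mpr (f (σ i)).isLt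
      calc ∑ x ∈ Finset.univ.image (fun i => A (σ i)), 2 ^ x
          ≤ ∑ x ∈ Finset.range n, 2 ^ x := Finset.sum_le_sum_of_subset hsub
        _ = 2 ^ n - 1 := by have := sum_range_two_pow n; omega
    have h3 : (2 ^ n - 1) * 2 ^ (k + δ - 1) < 2 ^ (n + k + δ - 1) := by
      have hpos : 0 < 2 ^ (k + δ - 1) := by positivity
      have : 2 ^ n * 2 ^ (k + δ - 1) = 2 ^ (n + k + δ - 1) := by
        rw [← pow_add]
        congr 1
        omega
      have h2n : 0 < 2 ^ n := by positivity
      nlinarith [Nat.sub_lt h2n one_pos]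
    calc permExp A B σ ≤ (∑ i, 2 ^ (A (σ i))) * 2 ^ (k + δ - 1) := h1
      _ ≤ (2 ^ n - 1) * 2 ^ (k + δ - 1) := Nat.mul_le_mul_right _ h2
      _ < 2 ^ (n + k + δ - 1) := h3
      _ ≤ N := hN
  set φ : Equiv.Perm (Fin s) → Fin N := fun σ => ⟨permExp A B σ, hEσ σ⟩ with hφ
  set c : Fin N → ℤ := fun e => ∑ σ ∈ Finset.univ.filter (fun σ => φ σ = e),
      ((Equiv.Perm.sign σ : ℤ)) with hc
  have hprod : ∀ σ : Equiv.Perm (Fin s),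
      (∏ i, (𝒢.submatrix f g) (σ i) i) = α ^ permExp A B σ := by
    intro σ
    rw [permExp, ← Finset.prod_pow_eq_pow_sum]
    apply Finset.prod_congr rfl
    intro i _
    rw [Matrix.submatrix_apply, h𝒢]
  have hdet : (∑ e : Fin N, (c e : F) * α ^ (e : ℕ)) = 0 := by
    have step : ∑ e : Fin N, (c e : F) * α ^ (e : ℕ) =
        ∑ σ : Equiv.Perm (Fin s), ((Equiv.Perm.sign σ : ℤ) : F) * α ^ permExp A B σ := by
      rw [← Finset.sum_fiberwise (g := φ) (f := fun σ => ((Equiv.Perm.sign σ : ℤ) : F) * α ^ permExp A B σ)]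
      apply Finset.sum_congr rfl
      intro e _
      rw [hc]
      push_cast
      rw [Finset.sum_mul]
      apply Finset.sum_congr rfl
      intro σ hσ
      have : φ σ = e := (Finset.mem_filter.mp hσ).2
      have : permExp A B σ = (e : ℕ) := by rw [← this]
      rw [this]
    rw [step, ← hdet0, Matrix.det_apply]
    apply Finset.sum_congr rfl
    intro σ _
    rw [hprod σ, Units.smul_def, zsmul_eq_mul]
  have hdvd := primitive_int_coeffs hp hN0 hcard α hα c hdet (φ 1)
  have hone : c (φ 1) = 1 := by
    have hfilter : Finset.univ.filter (fun σ => φ σ = φ 1) = {1} := by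
      ext σ
      simp only [Finset.mem_filter, Finset.mem_univ, true_and, Finset.mem_singleton]
      constructor
      · intro h
        by_contra hne
        have := perm_lt A B hAm hBm σ hne
        have : permExp A B σ = permExp A B 1 := congrArg Fin.val h
        omega
      · rintro rfl; rfl
    rw [hc]
    simp only
    rw [hfilter, Finset.sum_singleton]
    simp
  rw [hone] at hdvd
  have : (p : ℤ) ∣ 1 := hdvd
  have h1 : p ∣ 1 := Int.ofNat_dvd.mp this
  have := hp.two_le
  have := Nat.dvd_one.mp h1
  omega



open scoped Classical in
/-- Key fact: superregular matrices map vectors of support `t` to vectors with at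
least `n - t + 1` nonzero entries. -/
lemma superregular_weight {F : Type*} [Field F] {n m : ℕ} (𝒢 : Matrix (Fin n) (Fin m) F)
    (hs : Superregular 𝒢) (w : Fin m → F) (hw : w ≠ 0) :
    n + 1 ≤ (Finset.univ.filter fun x => 𝒢.mulVec w x ≠ 0).card +
      (Finset.univ.filter fun c => w c ≠ 0).card := by
  classical
  set T := Finset.univ.filter fun c => w c ≠ 0 with hT
  set t := T.card with ht
  have htpos : 0 < t := by
    rw [ht, Finset.card_pos, hT]
    obtain ⟨c, hc⟩ := Function.ne_iff.mp hw
    exact ⟨c, Finset.mem_filter.mpr ⟨Finset.mem_univ _, hc⟩⟩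
  set Z := Finset.univ.filter fun x => ¬ (𝒢.mulVec w x ≠ 0) with hZ
  have hcards : (Finset.univ.filter fun x => 𝒢.mulVec w x ≠ 0).card + Z.card = n := by
    rw [hZ, Finset.card_filter_add_card_filter_not]
    exact Fintype.card_fin n
  rcases Nat.lt_or_ge Z.card t with h | h
  · omega
  exfalso
  obtain ⟨Z', hZ'sub, hZ'card⟩ := Finset.exists_subset_card_eq h
  set f : Fin t → Fin n := fun i => ((Z'.orderIsoOfFin hZ'card) i : Fin n) with hf
  set g : Fin t → Fin m := fun i => ((T.orderIsoOfFin rfl) i : Fin m) with hg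
  have hfm : StrictMono f := fun i j hij => (Z'.orderIsoOfFin hZ'card).strictMono hij
  have hgm : StrictMono g := fun i j hij => (T.orderIsoOfFin rfl).strictMono hij
  have hdet := hs t f g hfm hgm
  have himg : Finset.univ.image g = T := by
    apply Finset.eq_of_subset_of_card_le
    · intro c hc
      simp only [Finset.mem_image] at hc
      obtain ⟨i, _, rfl⟩ := hc
      exact ((T.orderIsoOfFin rfl) i).2
    · rw [Finset.card_image_of_injective _ hgm.injective]
      simp
      exact ht.ge
  have hzero : (𝒢.submatrix f g).mulVec (fun i => w (g i)) = 0 := by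
    funext x
    have hx : 𝒢.mulVec w (f x) = 0 := by
      have : f x ∈ Z := hZ'sub ((Z'.orderIsoOfFin hZ'card) x).2
      rw [hZ, Finset.mem_filter] at this
      simpa using this.2
    show ∑ i, 𝒢 (f x) (g i) * w (g i) = (0 : Fin t → F) x
    rw [Pi.zero_apply, ← hx]
    rw [show (∑ i, 𝒢 (f x) (g i) * w (g i)) = ∑ c ∈ Finset.univ.image g, 𝒢 (f x) c * w c from
      (Finset.sum_image (f := fun c => 𝒢 (f x) c * w c) (g := g)
        (fun a _ b _ hab => hgm.injective hab)).symm, himg]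
    rw [Matrix.mulVec]
    apply Finset.sum_subset (Finset.subset_univ T)
    intro c _ hc
    have : w c = 0 := by
      by_contra hwc
      exact hc (Finset.mem_filter.mpr ⟨Finset.mem_univ _, hwc⟩)
    rw [this, mul_zero]
  have := Matrix.eq_zero_of_mulVec_eq_zero hdet hzero
  have h0 : w (g ⟨0, htpos⟩) = 0 := congrFun this ⟨0, htpos⟩
  have : g ⟨0, htpos⟩ ∈ T := ((T.orderIsoOfFin rfl) ⟨0, htpos⟩).2
  rw [hT, Finset.mem_filter] at this
  exact this.2 h0


open scoped Classical in
lemma polyWeight_two_layers {F : Type*} [Field F] {n : ℕ} (v : Fin n → Polynomial F)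
    (j j' : ℕ) (h : j ≠ j') :
    (Finset.univ.filter fun x => (v x).coeff j ≠ 0).card +
      (Finset.univ.filter fun x => (v x).coeff j' ≠ 0).card ≤ polyWeight v := by
  rw [Finset.card_filter, Finset.card_filter, ← Finset.sum_add_distrib]
  apply Finset.sum_le_sum
  intro x _
  by_cases h1 : (v x).coeff j ≠ 0 <;> by_cases h2 : (v x).coeff j' ≠ 0
  · rw [if_pos h1, if_pos h2]
    have hsub : ({j, j'} : Finset ℕ) ⊆ (v x).support := by
      intro i hi
      rcases Finset.mem_insert.mp hi with rfl | hi
      · exact Polynomial.mem_support_iff.mpr h1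
      · rw [Finset.mem_singleton.mp hi]
        exact Polynomial.mem_support_iff.mpr h2
    calc 1 + 1 = ({j, j'} : Finset ℕ).card := (Finset.card_pair h).symm
      _ ≤ _ := Finset.card_le_card hsub
  · rw [if_pos h1, if_neg h2]
    simpa using Finset.card_le_card (Finset.singleton_subset_iff.mpr
      (Polynomial.mem_support_iff.mpr h1))
  · rw [if_neg h1, if_pos h2]
    simpa using Finset.card_le_card (Finset.singleton_subset_iff.mpr
      (Polynomial.mem_support_iff.mpr h2))
  · rw [if_neg h1, if_neg h2]
    simp

open scoped Classical in
lemma polyWeight_one_layer {F : Type*} [Field F] {n : ℕ} (v : Fin n → Polynomial F)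
    (j : ℕ) :
    (Finset.univ.filter fun x => (v x).coeff j ≠ 0).card ≤ polyWeight v := by
  rw [Finset.card_filter]
  apply Finset.sum_le_sum
  intro x _
  by_cases h1 : (v x).coeff j ≠ 0
  · rw [if_pos h1]
    simpa using Finset.card_le_card (Finset.singleton_subset_iff.mpr
      (Polynomial.mem_support_iff.mpr h1))
  · rw [if_neg h1]
    simp

lemma exists_kernel_vec {F : Type*} [Field F] {a b : ℕ} (h : a < b)
    (M : Matrix (Fin a) (Fin b) F) : ∃ y : Fin b → F, y ≠ 0 ∧ M.mulVec y = 0 := by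
  have hni : ¬ Function.Injective M.mulVecLin := by
    intro hinj
    have := LinearMap.finrank_le_finrank_of_injective hinj
    simp only [Module.finrank_pi, Fintype.card_fin] at this
    omega
  rw [← LinearMap.ker_eq_bot] at hni
  obtain ⟨y, hy, hy0⟩ := Submodule.exists_mem_ne_zero_of_ne_bot hni
  exact ⟨y, hy0, hy⟩

lemma fin_card_ge (n m : ℕ) (hm : m ≤ n) :
    (Finset.univ.filter fun x : Fin n => ¬((x : ℕ) < m)).card = n - m := by
  rw [Finset.card_filter]
  rw [Fin.sum_univ_eq_sum_range (fun i => if ¬(i < m) then 1 else 0) n]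
  rw [← Finset.card_filter]
  have : (Finset.range n).filter (fun i => ¬(i < m)) = Finset.Ico m n := by
    ext i
    simp only [Finset.mem_filter, Finset.mem_range, Finset.mem_Ico, not_lt]
    omega
  rw [this, Nat.card_Ico]

section DetCoeff
variable {F : Type*} [Field F] {n k δ : ℕ}

lemma filter_lt_card (hδk : δ < k) :
    ((Finset.univ : Finset (Fin k)).filter (fun r : Fin k => (r : ℕ) < δ)).card = δ := by
  have : ((Finset.univ : Finset (Fin k)).filter (fun r : Fin k => (r : ℕ) < δ)) =
      Finset.univ.image (Fin.castLE hδk.le) := by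
    ext r
    simp only [Finset.mem_filter, Finset.mem_univ, true_and, Finset.mem_image]
    constructor
    · intro h
      exact ⟨⟨(r : ℕ), h⟩, by ext; rfl⟩
    · rintro ⟨s, rfl⟩
      exact s.isLt
  rw [this, Finset.card_image_of_injective _ (Fin.castLE_injective _), Finset.card_univ,
    Fintype.card_fin]

/-- Sum over `Fin k` of a function vanishing on indices `≥ δ` equals the sum over `Fin δ`. -/
lemma sum_fin_lt_eq {M : Type*} [AddCommMonoid M] (hδk : δ < k) (h : Fin k → M)
    (h0 : ∀ r : Fin k, ¬((r : ℕ) < δ) → h r = 0) :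
    ∑ r, h r = ∑ s : Fin δ, h (Fin.castLE hδk.le s) := by
  rw [← Finset.sum_image (g := Fin.castLE hδk.le)
    (fun a _ b _ hab => Fin.castLE_injective _ hab)]
  symm
  apply Finset.sum_subset (Finset.subset_univ _)
  intro r _ hr
  apply h0
  intro hlt
  apply hr
  simp only [Finset.mem_image]
  exact ⟨⟨(r : ℕ), hlt⟩, Finset.mem_univ _, by ext; rfl⟩

lemma det_natDegree_coeff (hδk : δ < k)
    (G : Matrix (Fin n) (Fin k) (Polynomial F))
    (a b : Matrix (Fin n) (Fin k) F)
    (hGab : ∀ x r, G x r = C (a x r) + (if (r : ℕ) < δ then C (b x r) else 0) * X)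
    (f : Fin k → Fin n) :
    (G.submatrix f id).det.natDegree ≤ δ ∧
    (G.submatrix f id).det.coeff δ =
      ((Matrix.of fun x (r : Fin k) =>
        if (r : ℕ) < δ then b x r else a x r).submatrix f id).det := by
  have hdeg1 : ∀ (x : Fin n) (r : Fin k), (G x r).natDegree ≤ if (r : ℕ) < δ then 1 else 0 := by
    intro x r
    rw [hGab]
    split_ifs with h
    · apply le_trans (natDegree_add_le _ _)
      simp only [natDegree_C, max_le_iff]
      refine ⟨Nat.zero_le _, le_trans (natDegree_mul_le) ?_⟩
      simp [natDegree_C, natDegree_X]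
    · simp
  have hsum_ind : ∑ r : Fin k, (if (r : ℕ) < δ then 1 else 0) = δ := by
    rw [← Finset.card_filter]
    exact filter_lt_card hδk
  have hprod_deg : ∀ σ : Equiv.Perm (Fin k),
      (∏ r, G (f (σ r)) r).natDegree ≤ δ := by
    intro σ
    apply le_trans (natDegree_prod_le _ _)
    rw [← hsum_ind]
    exact Finset.sum_le_sum fun r _ => hdeg1 _ _
  constructor
  · rw [Matrix.det_apply]
    apply natDegree_sum_le_of_forall_le
    intro σ _
    rw [Units.smul_def, zsmul_eq_mul]
    apply le_trans natDegree_mul_le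
    simpa using hprod_deg σ
  · rw [Matrix.det_apply, Matrix.det_apply, Polynomial.finset_sum_coeff]
    apply Finset.sum_congr rfl
    intro σ _
    rw [Units.smul_def, Units.smul_def, Polynomial.coeff_smul]
    congr 1
    have hsplit : (∏ r, (G.submatrix f id) (σ r) r) =
        (∏ r ∈ Finset.univ.filter (fun r : Fin k => (r : ℕ) < δ), (C (a (f (σ r)) r) + C (b (f (σ r)) r) * X)) *
        C (∏ r ∈ Finset.univ.filter (fun r : Fin k => ¬(r : ℕ) < δ), a (f (σ r)) r) := by
      rw [← Finset.prod_filter_mul_prod_filter_not Finset.univ (fun r : Fin k => (r : ℕ) < δ)]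
      congr 1
      · apply Finset.prod_congr rfl
        intro r hr
        rw [Matrix.submatrix_apply, id_eq, hGab, if_pos (Finset.mem_filter.mp hr).2]
      · rw [map_prod]
        apply Finset.prod_congr rfl
        intro r hr
        rw [Matrix.submatrix_apply, id_eq, hGab, if_neg (Finset.mem_filter.mp hr).2]
        simp
    rw [hsplit, Polynomial.coeff_mul_C]
    have hccard := filter_lt_card (δ := δ) hδk
    have hcoeffprod := Polynomial.coeff_prod_of_natDegree_le
      (s := Finset.univ.filter (fun r : Fin k => (r : ℕ) < δ))
      (fun r => (C (a (f (σ r)) r) + C (b (f (σ r)) r) * X)) 1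
      (by
        intro r _
        apply le_trans (natDegree_add_le _ _)
        simp only [natDegree_C, max_le_iff]
        exact ⟨Nat.zero_le _, le_trans natDegree_mul_le (by simp [natDegree_C, natDegree_X])⟩)
    rw [hccard, mul_one] at hcoeffprod
    rw [hcoeffprod]
    have hc1 : ∀ (r : Fin k), (C (a (f (σ r)) r) + C (b (f (σ r)) r) * X).coeff 1 = b (f (σ r)) r := by
      intro r
      rw [Polynomial.coeff_add, Polynomial.coeff_C, Polynomial.coeff_C_mul, Polynomial.coeff_X_one]
      simp
    rw [Finset.prod_congr rfl (fun r _ => hc1 r)]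
    rw [← Finset.prod_filter_mul_prod_filter_not Finset.univ (fun r : Fin k => (r : ℕ) < δ)
      (fun r => ((Matrix.of fun x (r : Fin k) => if (r : ℕ) < δ then b x r else a x r).submatrix f id) (σ r) r)]
    congr 1
    · apply Finset.prod_congr rfl
      intro r hr
      simp only [Matrix.submatrix_apply, id_eq, Matrix.of_apply]
      rw [if_pos (Finset.mem_filter.mp hr).2]
    · apply Finset.prod_congr rfl
      intro r hr
      simp only [Matrix.submatrix_apply, id_eq, Matrix.of_apply]
      rw [if_neg (Finset.mem_filter.mp hr).2]

end DetCoeff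


section Col
variable {F : Type*} [Field F] {n k δ : ℕ}

def colMap (hδk : δ < k) (y : Fin k ⊕ Fin δ) : Fin (k + δ) :=
  Sum.elim
    (fun r : Fin k => (⟨if (r : ℕ) < δ then 2 * (r : ℕ) else δ + (r : ℕ), by
      rcases r with ⟨r, hr⟩; dsimp; split_ifs <;> omega⟩ : Fin (k + δ)))
    (fun r : Fin δ => (⟨2 * (r : ℕ) + 1, by rcases r with ⟨r, hr⟩; dsimp; omega⟩ : Fin (k + δ))) y

lemma colMap_inl_val (hδk : δ < k) (r : Fin k) :
    ((colMap hδk (.inl r)) : ℕ) = if (r : ℕ) < δ then 2 * (r : ℕ) else δ + (r : ℕ) := rfl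

lemma colMap_inr_val (hδk : δ < k) (r : Fin δ) :
    ((colMap hδk (.inr r)) : ℕ) = 2 * (r : ℕ) + 1 := rfl

lemma colMap_injective (hδk : δ < k) : Function.Injective (colMap hδk) := by
  intro y1 y2 h
  have hv := congrArg Fin.val h
  rcases y1 with r1 | r1 <;> rcases y2 with r2 | r2
  · rw [colMap_inl_val, colMap_inl_val] at hv
    have h1 := r1.isLt
    have h2 := r2.isLt
    congr 1
    ext
    split_ifs at hv <;> omega
  · rw [colMap_inl_val, colMap_inr_val] at hv
    exfalso
    have h2 := r2.isLt
    split_ifs at hv <;> omega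
  · rw [colMap_inr_val, colMap_inl_val] at hv
    exfalso
    have h2 := r1.isLt
    split_ifs at hv <;> omega
  · rw [colMap_inr_val, colMap_inr_val] at hv
    congr 1
    ext
    omega

noncomputable def colEquiv (hδk : δ < k) : (Fin k ⊕ Fin δ) ≃ Fin (k + δ) :=
  Equiv.ofBijective (colMap hδk)
    ((Fintype.bijective_iff_injective_and_card _).mpr ⟨colMap_injective hδk, by simp⟩)

lemma colEquiv_inl_val (hδk : δ < k) (r : Fin k) :
    ((colEquiv hδk (.inl r) : Fin (k + δ)) : ℕ) = if (r : ℕ) < δ then 2 * (r : ℕ) else δ + (r : ℕ) := rfl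

lemma colEquiv_inr_val (hδk : δ < k) (r : Fin δ) :
    ((colEquiv hδk (.inr r) : Fin (k + δ)) : ℕ) = 2 * (r : ℕ) + 1 := rfl

/-- The sliding-coefficient vector associated to `u` at level `j`. -/
noncomputable def wfun (hδk : δ < k) (u : Fin k → Polynomial F) (j : ℕ) :
    Fin (k + δ) → F := fun c =>
  match (colEquiv hδk).symm c with
  | .inl r => (u r).coeff j
  | .inr r => if j = 0 then 0 else (u (Fin.castLE hδk.le r)).coeff (j - 1)

lemma coeff_X_mul' {F : Type*} [Field F] (q : Polynomial F) (j : ℕ) :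
    (X * q).coeff j = if j = 0 then 0 else q.coeff (j - 1) := by
  cases j with
  | zero => simp [Polynomial.mul_coeff_zero]
  | succ j => simp [Polynomial.coeff_X_mul]

lemma wfun_inl (hδk : δ < k) (u : Fin k → Polynomial F) (j : ℕ) (r : Fin k) :
    wfun hδk u j (colEquiv hδk (.inl r)) = (u r).coeff j := by
  rw [wfun, Equiv.symm_apply_apply]

lemma wfun_inr (hδk : δ < k) (u : Fin k → Polynomial F) (j : ℕ) (r : Fin δ) :
    wfun hδk u j (colEquiv hδk (.inr r)) =
      if j = 0 then 0 else (u (Fin.castLE hδk.le r)).coeff (j - 1) := by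
  rw [wfun, Equiv.symm_apply_apply]

lemma coeff_identity (hδk : δ < k)
    (α : F)
    (𝒢 : Matrix (Fin n) (Fin (k + δ)) F)
    (h𝒢 : ∀ (x : Fin n) (c₀ : Fin (k + δ)), 𝒢 x c₀ = α ^ 2 ^ ((x : ℕ) + (c₀ : ℕ)))
    (G : Matrix (Fin n) (Fin k) (Polynomial F))
    (hG : ∀ (x : Fin n) (r : Fin k),
      G x r = Polynomial.C (α ^ 2 ^ ((x : ℕ) + (if (r : ℕ) < δ then 2 * (r : ℕ) else δ + (r : ℕ)))) +
        (if (r : ℕ) < δ then Polynomial.C (α ^ 2 ^ ((x : ℕ) + (2 * (r : ℕ) + 1))) else 0)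
          * Polynomial.X)
    (u : Fin k → Polynomial F) (x : Fin n) (j : ℕ) :
    (G.mulVec u x).coeff j = 𝒢.mulVec (wfun hδk u j) x := by
  have hRHS : 𝒢.mulVec (wfun hδk u j) x =
      (∑ r : Fin k, α ^ 2 ^ ((x : ℕ) + (if (r : ℕ) < δ then 2 * (r : ℕ) else δ + (r : ℕ))) * (u r).coeff j) +
      ∑ r : Fin δ, α ^ 2 ^ ((x : ℕ) + (2 * (r : ℕ) + 1)) *
        (if j = 0 then 0 else (u (Fin.castLE hδk.le r)).coeff (j - 1)) := by
    show (∑ c, 𝒢 x c * wfun hδk u j c) = _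
    rw [← Equiv.sum_comp (colEquiv hδk) (fun c => 𝒢 x c * wfun hδk u j c)]
    rw [Fintype.sum_sum_type]
    congr 1
    · apply Finset.sum_congr rfl
      intro r _
      rw [wfun_inl, h𝒢, colEquiv_inl_val]
    · apply Finset.sum_congr rfl
      intro r _
      rw [wfun_inr, h𝒢, colEquiv_inr_val]
  rw [hRHS]
  have hLHS : (G.mulVec u x).coeff j =
      ∑ r : Fin k, (α ^ 2 ^ ((x : ℕ) + (if (r : ℕ) < δ then 2 * (r : ℕ) else δ + (r : ℕ))) * (u r).coeff j +
        (if (r : ℕ) < δ then α ^ 2 ^ ((x : ℕ) + (2 * (r : ℕ) + 1)) *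
          (if j = 0 then 0 else (u r).coeff (j - 1)) else 0)) := by
    rw [Matrix.mulVec, dotProduct, Polynomial.finset_sum_coeff]
    apply Finset.sum_congr rfl
    intro r _
    rw [hG, add_mul, Polynomial.coeff_add, Polynomial.coeff_C_mul]
    congr 1
    by_cases h : (r : ℕ) < δ
    · rw [if_pos h, if_pos h, mul_assoc, Polynomial.coeff_C_mul, coeff_X_mul']
    · rw [if_neg h, if_neg h]
      simp
  rw [hLHS, Finset.sum_add_distrib]
  congr 1
  rw [sum_fin_lt_eq hδk _ (fun r hr => by rw [if_neg hr])]
  apply Finset.sum_congr rfl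
  intro s _
  rw [if_pos (by simpa using s.isLt : ((Fin.castLE hδk.le s : Fin k) : ℕ) < δ)]
  simp only [Fin.coe_castLE]

open scoped Classical in
open scoped Classical in
lemma wfun_card (hδk : δ < k) (u : Fin k → Polynomial F) (j : ℕ) :
    (Finset.univ.filter fun c => wfun hδk u j c ≠ 0).card =
    (Finset.univ.filter fun r : Fin k => (u r).coeff j ≠ 0).card +
    (Finset.univ.filter fun r : Fin δ =>
      (if j = 0 then (0 : F) else (u (Fin.castLE hδk.le r)).coeff (j - 1)) ≠ 0).card := by
  rw [Finset.card_filter, Finset.card_filter, Finset.card_filter]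
  rw [← Equiv.sum_comp (colEquiv hδk) (fun c => if wfun hδk u j c ≠ 0 then 1 else 0)]
  rw [Fintype.sum_sum_type]
  congr 1
  · apply Finset.sum_congr rfl
    intro r _
    rw [wfun_inl]
  · apply Finset.sum_congr rfl
    intro r _
    rw [wfun_inr]

end Col


lemma sum_fin_ge_eq {M : Type*} [AddCommMonoid M] {k δ : ℕ} (hδk : δ ≤ k) (h : Fin k → M)
    (h0 : ∀ r : Fin k, (r : ℕ) < δ → h r = 0) :
    ∑ r, h r = ∑ s : Fin (k - δ), h ⟨δ + (s : ℕ), by have := s.isLt; omega⟩ := by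
  set big : Fin (k - δ) → Fin k := fun s => ⟨δ + (s : ℕ), by have := s.isLt; omega⟩ with hbig
  have hinj : Function.Injective big := by
    intro s1 s2 hs
    have := congrArg Fin.val hs
    simp only [hbig] at this
    ext
    omega
  rw [← Finset.sum_image (g := big) (fun a _ b _ hab => hinj hab)]
  symm
  apply Finset.sum_subset (Finset.subset_univ _)
  intro r _ hr
  apply h0
  by_contra hge
  apply hr
  simp only [Finset.mem_image]
  refine ⟨⟨(r : ℕ) - δ, by have := r.isLt; omega⟩, Finset.mem_univ _, ?_⟩
  simp only [hbig]
  ext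
  simp only []
  omega

/-- Construction 2 for `δ < k`: the matrix `𝒢` with entries `α^{2^{i+j}}`, for a primitive
element `α` of `F_{p^N}` with `N ≥ 2^{n+k+δ-1}`, is superregular, and the polynomial matrix
`G(z) = G₀ + G₁ z` whose coefficient vectors are the suitably arranged columns of `𝒢`
generates an MDS convolutional code of rate `k/n` and degree `δ`, i.e. the code has degree
`δ` and free distance `n - k + δ + 1`. -/
theorem construction2_small_delta {F : Type*} [Field F] [Fintype F]
    {n k δ p N : ℕ} (hδ : 0 < δ) (hδk : δ < k) (hkn : k < n)
    (hn : n ≥ k + δ - 1)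
    (hp : p.Prime) (hcard : Fintype.card F = p ^ N)
    (hN : N ≥ 2 ^ (n + k + δ - 1))
    (α : F) (hα : orderOf α = p ^ N - 1)
    (𝒢 : Matrix (Fin n) (Fin (k + δ)) F)
    (h𝒢 : ∀ (x : Fin n) (c₀ : Fin (k + δ)),
      𝒢 x c₀ = α ^ 2 ^ ((x : ℕ) + (c₀ : ℕ)))
    (G : Matrix (Fin n) (Fin k) (Polynomial F))
    (hG : ∀ (x : Fin n) (r : Fin k),
      G x r = Polynomial.C (α ^ 2 ^ ((x : ℕ) + (if (r : ℕ) < δ then 2 * (r : ℕ) else δ + (r : ℕ)))) +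
        (if (r : ℕ) < δ then Polynomial.C (α ^ 2 ^ ((x : ℕ) + (2 * (r : ℕ) + 1))) else 0)
          * Polynomial.X) :
    Superregular 𝒢
    ∧ (∀ u : Fin k → Polynomial F, G.mulVec u = 0 → u = 0)
    ∧ maxMinorDeg G = δ
    ∧ freeDist G = n - k + δ + 1 := by
  classical
  -- Part 1 : superregularity
  have hsuper : Superregular 𝒢 := superregular_𝒢 hδ hp hcard hN α hα 𝒢 h𝒢
  -- column selection for the coefficient of `z^δ` in the minors
  have hgmixlt : ∀ r : Fin k, (if (r : ℕ) < δ then 2 * (r : ℕ) + 1 else δ + (r : ℕ)) < k + δ := by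
    intro r
    have := r.isLt
    split_ifs <;> omega
  set gmix : Fin k → Fin (k + δ) :=
    fun r => ⟨if (r : ℕ) < δ then 2 * (r : ℕ) + 1 else δ + (r : ℕ), hgmixlt r⟩ with hgmixdef
  have hgmixval : ∀ r : Fin k,
      ((gmix r : Fin (k + δ)) : ℕ) = if (r : ℕ) < δ then 2 * (r : ℕ) + 1 else δ + (r : ℕ) :=
    fun r => rfl
  have hgmixmono : StrictMono gmix := by
    intro r r' hrr'
    rw [Fin.lt_def] at hrr' ⊢
    rw [hgmixval, hgmixval]
    have h1 := r.isLt
    have h2 := r'.isLt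
    split_ifs <;> omega
  have hdetfacts : ∀ f : Fin k → Fin n,
      (G.submatrix f id).det.natDegree ≤ δ ∧
      (G.submatrix f id).det.coeff δ = (𝒢.submatrix f gmix).det := by
    intro f
    have h := det_natDegree_coeff (n := n) hδk G
      (fun x r => α ^ 2 ^ ((x : ℕ) + (if (r : ℕ) < δ then 2 * (r : ℕ) else δ + (r : ℕ))))
      (fun x r => α ^ 2 ^ ((x : ℕ) + (2 * (r : ℕ) + 1)))
      (fun x r => hG x r) f
    refine ⟨h.1, ?_⟩
    rw [h.2]
    congr 1
    ext x r
    simp only [Matrix.submatrix_apply, Matrix.of_apply, id_eq, h𝒢]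
    split_ifs with h1 <;> simp [hgmixval, h1]
  have hcoeffδ : ∀ f : Fin k → Fin n, StrictMono f → (G.submatrix f id).det.coeff δ ≠ 0 := by
    intro f hf
    rw [(hdetfacts f).2]
    exact hsuper k f gmix hf hgmixmono
  set f₀ : Fin k → Fin n := Fin.castLE hkn.le with hf₀def
  have hf₀mono : StrictMono f₀ := by
    intro i j hij
    rw [Fin.lt_def] at hij ⊢
    simpa [hf₀def] using hij
  have hdet₀ : (G.submatrix f₀ id).det ≠ 0 := by
    intro h
    exact hcoeffδ f₀ hf₀mono (by rw [h, Polynomial.coeff_zero])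
  -- Part 2 : full rank
  have hpart2 : ∀ u : Fin k → Polynomial F, G.mulVec u = 0 → u = 0 := by
    intro u hu
    apply Matrix.eq_zero_of_mulVec_eq_zero hdet₀
    funext x
    have := congrFun hu (f₀ x)
    simpa [Matrix.mulVec, dotProduct, Matrix.submatrix_apply] using this
  -- Part 3 : degree of the code
  have hpart3 : maxMinorDeg G = δ := by
    apply le_antisymm
    · apply Finset.sup_le
      intro f _
      exact (hdetfacts f).1
    · have hnd : (G.submatrix f₀ id).det.natDegree = δ :=
        le_antisymm (hdetfacts f₀).1 (Polynomial.le_natDegree_of_ne_zero (hcoeffδ f₀ hf₀mono))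
      calc δ = (G.submatrix f₀ id).det.natDegree := hnd.symm
        _ ≤ maxMinorDeg G := Finset.le_sup
          (f := fun f : Fin k → Fin n => ((G.submatrix f id).det).natDegree)
          (Finset.mem_univ f₀)
  -- Part 4a : lower bound on the weight of nonzero codewords
  have hlow : ∀ u : Fin k → Polynomial F, G.mulVec u ≠ 0 →
      n - k + δ + 1 ≤ polyWeight (G.mulVec u) := by
    intro u hu
    have hu0 : u ≠ 0 := fun h => hu (by rw [h, Matrix.mulVec_zero])
    set S : Finset ℕ := Finset.univ.biUnion (fun r : Fin k => (u r).support) with hSdef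
    have hSne : S.Nonempty := by
      obtain ⟨r, hr⟩ := Function.ne_iff.mp hu0
      obtain ⟨j, hj⟩ := Polynomial.support_nonempty.mpr hr
      exact ⟨j, Finset.mem_biUnion.mpr ⟨r, Finset.mem_univ r, hj⟩⟩
    set j0 := S.min' hSne with hj0def
    set J := S.max' hSne with hJdef
    have hj0J : j0 ≤ J := S.min'_le _ (S.max'_mem hSne)
    have hzero_lt : ∀ j, j < j0 → ∀ r : Fin k, (u r).coeff j = 0 := by
      intro j hj r
      by_contra hc
      have hmem : j ∈ S := Finset.mem_biUnion.mpr
        ⟨r, Finset.mem_univ r, Polynomial.mem_support_iff.mpr hc⟩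
      have := S.min'_le j hmem
      omega
    have hzero_gt : ∀ j, J < j → ∀ r : Fin k, (u r).coeff j = 0 := by
      intro j hj r
      by_contra hc
      have hmem : j ∈ S := Finset.mem_biUnion.mpr
        ⟨r, Finset.mem_univ r, Polynomial.mem_support_iff.mpr hc⟩
      have := S.le_max' j hmem
      omega
    have hj0ex : ∃ r : Fin k, (u r).coeff j0 ≠ 0 := by
      obtain ⟨r, _, hr⟩ := Finset.mem_biUnion.mp (S.min'_mem hSne)
      exact ⟨r, Polynomial.mem_support_iff.mp hr⟩
    have hJex : ∃ r : Fin k, (u r).coeff J ≠ 0 := by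
      obtain ⟨r, _, hr⟩ := Finset.mem_biUnion.mp (S.max'_mem hSne)
      exact ⟨r, Polynomial.mem_support_iff.mp hr⟩
    set cw : ℕ → ℕ :=
      fun j => (Finset.univ.filter fun x => 𝒢.mulVec (wfun hδk u j) x ≠ 0).card with hcwdef
    set cu : ℕ → ℕ :=
      fun j => (Finset.univ.filter fun r : Fin k => (u r).coeff j ≠ 0).card with hcudef
    set cd : ℕ → ℕ := fun j => (Finset.univ.filter fun r : Fin δ =>
        (if j = 0 then (0 : F) else (u (Fin.castLE hδk.le r)).coeff (j - 1)) ≠ 0).card with hcddef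
    have hbound : ∀ j, wfun hδk u j ≠ 0 → n + 1 ≤ cw j + (cu j + cd j) := by
      intro j hw
      have h1 := superregular_weight 𝒢 hsuper (wfun hδk u j) hw
      have h2 := wfun_card hδk u j
      rw [h2] at h1
      exact h1
    have hfilter_eq : ∀ j, (Finset.univ.filter fun x => (G.mulVec u x).coeff j ≠ 0)
        = (Finset.univ.filter fun x => 𝒢.mulVec (wfun hδk u j) x ≠ 0) := by
      intro j
      apply Finset.filter_congr
      intro x _
      rw [coeff_identity hδk α 𝒢 h𝒢 G hG u x j]
    have hlayer2 : ∀ j j', j ≠ j' → cw j + cw j' ≤ polyWeight (G.mulVec u) := by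
      intro j j' hjj'
      have := polyWeight_two_layers (G.mulVec u) j j' hjj'
      rw [hfilter_eq j, hfilter_eq j'] at this
      exact this
    have hlayer1 : ∀ j, cw j ≤ polyWeight (G.mulVec u) := by
      intro j
      have := polyWeight_one_layer (G.mulVec u) j
      rw [hfilter_eq j] at this
      exact this
    have hcuk : ∀ j, cu j ≤ k := by
      intro j
      rw [hcudef]
      exact le_trans (Finset.card_filter_le _ _) (by simp)
    have hcdδ : ∀ j, cd j ≤ δ := by
      intro j
      rw [hcddef]
      exact le_trans (Finset.card_filter_le _ _) (by simp)
    have hcd_j0 : cd j0 = 0 := by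
      rw [hcddef]
      simp only
      rw [Finset.card_eq_zero, Finset.filter_eq_empty_iff]
      intro r _
      rcases Nat.eq_zero_or_pos j0 with h0 | h0
      · rw [if_pos h0]
        simp
      · rw [if_neg (by omega)]
        rw [hzero_lt (j0 - 1) (by omega)]
        simp
    have hcu_J1 : cu (J + 1) = 0 := by
      rw [hcudef]
      simp only
      rw [Finset.card_eq_zero, Finset.filter_eq_empty_iff]
      intro r _
      rw [hzero_gt (J + 1) (by omega)]
      simp
    have hWj0 : wfun hδk u j0 ≠ 0 := by
      obtain ⟨r, hr⟩ := hj0ex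
      intro h
      apply hr
      have := congrFun h (colEquiv hδk (.inl r))
      rwa [wfun_inl] at this
    by_cases hcase : ∃ r : Fin δ, (u (Fin.castLE hδk.le r)).coeff J ≠ 0
    · obtain ⟨r, hr⟩ := hcase
      have hWJ1 : wfun hδk u (J + 1) ≠ 0 := by
        intro h
        apply hr
        have := congrFun h (colEquiv hδk (.inr r))
        rw [wfun_inr] at this
        simpa using this
      have h1 := hbound j0 hWj0
      have h2 := hbound (J + 1) hWJ1
      have h3 := hlayer2 j0 (J + 1) (by omega)
      have h4 := hcuk j0
      have h5 := hcdδ (J + 1)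
      omega
    · push_neg at hcase
      have hlt0 : ∀ r : Fin k, (r : ℕ) < δ → (u r).coeff J = 0 := by
        intro r hrδ
        have h := hcase ⟨(r : ℕ), hrδ⟩
        have heq : Fin.castLE hδk.le (⟨(r : ℕ), hrδ⟩ : Fin δ) = r := by
          ext
          rfl
        rwa [heq] at h
      have hcuJ : cu J ≤ k - δ := by
        have hsub : (Finset.univ.filter fun r : Fin k => (u r).coeff J ≠ 0) ⊆
            (Finset.univ.filter fun r : Fin k => ¬((r : ℕ) < δ)) := by
          intro r hrm
          rw [Finset.mem_filter] at hrm ⊢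
          exact ⟨hrm.1, fun hlt => hrm.2 (hlt0 r hlt)⟩
        have h := Finset.card_le_card hsub
        rw [fin_card_ge k δ hδk.le] at h
        exact h
      have hWJ : wfun hδk u J ≠ 0 := by
        obtain ⟨r, hr⟩ := hJex
        intro h
        apply hr
        have := congrFun h (colEquiv hδk (.inl r))
        rwa [wfun_inl] at this
      rcases eq_or_ne j0 J with heq | hne
      · have h1 := hbound j0 hWj0
        have h2 := hlayer1 j0
        have h3 : cu j0 = cu J := by rw [heq]
        omega
      · have h1 := hbound j0 hWj0
        have h2 := hbound J hWJ
        have h3 := hlayer2 j0 J hne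
        have h4 := hcuk j0
        have h5 := hcdδ J
        omega
  -- Part 4b : a codeword of weight exactly n - k + δ + 1
  have htpos : 0 < k - δ := by omega
  set gcol : Fin (k - δ) → Fin (k + δ) :=
    fun r => ⟨2 * δ + (r : ℕ), by have := r.isLt; omega⟩ with hgcoldef
  have hgcolval : ∀ r, ((gcol r : Fin (k + δ)) : ℕ) = 2 * δ + (r : ℕ) := fun r => rfl
  have hgcolmono : StrictMono gcol := by
    intro i j hij
    rw [Fin.lt_def] at hij ⊢
    rw [hgcolval, hgcolval]
    omega
  obtain ⟨y, hy0, hyker⟩ := exists_kernel_vec (show k - δ - 1 < k - δ by omega)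
      (Matrix.of fun (x : Fin (k - δ - 1)) (r : Fin (k - δ)) =>
        𝒢 ⟨(x : ℕ), by have := x.isLt; omega⟩ (gcol r))
  set V : Fin n → F := fun x => ∑ r : Fin (k - δ), 𝒢 x (gcol r) * y r with hVdef
  have hVzero : ∀ x : Fin n, (x : ℕ) < k - δ - 1 → V x = 0 := by
    intro x hx
    have h := congrFun hyker ⟨(x : ℕ), hx⟩
    simp only [Matrix.mulVec, dotProduct, Matrix.of_apply, Pi.zero_apply] at h
    rw [hVdef]
    simp only
    rw [← h]
  have hVne : ∀ x : Fin n, ¬((x : ℕ) < k - δ - 1) → V x ≠ 0 := by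
    intro x hx hVx
    set h : Fin (k - δ) → Fin n := fun i =>
      if hi : (i : ℕ) < k - δ - 1 then ⟨(i : ℕ), by omega⟩ else x with hhdef
    have hhmono : StrictMono h := by
      intro i j hij
      rw [Fin.lt_def] at hij
      have hi := i.isLt
      have hj := j.isLt
      rw [Fin.lt_def, hhdef]
      simp only
      split_ifs with h1 h2 h2
      · simpa using hij
      · simp only []
        omega
      · omega
      · omega
    have hdet := hsuper (k - δ) h gcol hhmono hgcolmono
    have hker : (𝒢.submatrix h gcol).mulVec y = 0 := by
      funext i
      show ∑ r, 𝒢 (h i) (gcol r) * y r = (0 : Fin (k - δ) → F) i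
      rw [Pi.zero_apply]
      by_cases hi : (i : ℕ) < k - δ - 1
      · have : h i = ⟨(i : ℕ), by omega⟩ := dif_pos hi
        rw [this]
        have hzz := hVzero ⟨(i : ℕ), by omega⟩ (by simpa using hi)
        rw [hVdef] at hzz
        exact hzz
      · have : h i = x := dif_neg hi
        rw [this]
        rw [hVdef] at hVx
        exact hVx
    have := Matrix.eq_zero_of_mulVec_eq_zero hdet hker
    exact hy0 this
  set u₀ : Fin k → Polynomial F := fun r =>
    if h : δ ≤ (r : ℕ) then C (y ⟨(r : ℕ) - δ, by have := r.isLt; omega⟩) else 0 with hu₀def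
  have hvC : ∀ x, G.mulVec u₀ x = C (V x) := by
    intro x
    show ∑ r, G x r * u₀ r = C (V x)
    rw [sum_fin_ge_eq hδk.le _ (by
      intro r hr
      have : u₀ r = 0 := dif_neg (by omega)
      rw [this, mul_zero])]
    rw [hVdef]
    simp only
    rw [map_sum]
    apply Finset.sum_congr rfl
    intro s _
    have hsk := s.isLt
    have hbig : ¬(((⟨δ + (s : ℕ), by omega⟩ : Fin k) : ℕ) < δ) := by simp
    have hu₀s : u₀ ⟨δ + (s : ℕ), by omega⟩ = C (y s) := by
      rw [hu₀def]
      simp only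
      rw [dif_pos (by simp)]
      congr 1
      congr 1
      ext
      simp
    rw [hu₀s, hG, if_neg hbig, if_neg hbig, h𝒢, hgcolval]
    rw [zero_mul, add_zero]
    show C (α ^ 2 ^ ((x : ℕ) + (δ + (δ + (s : ℕ))))) * C (y s)
        = C (α ^ 2 ^ ((x : ℕ) + (2 * δ + (s : ℕ))) * y s)
    rw [show (x : ℕ) + (δ + (δ + (s : ℕ))) = (x : ℕ) + (2 * δ + (s : ℕ)) by omega,
      ← _root_.map_mul]
  have hweight : polyWeight (G.mulVec u₀) = n - k + δ + 1 := by
    have h1 : polyWeight (G.mulVec u₀) =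
        (Finset.univ.filter fun x : Fin n => ¬((x : ℕ) < k - δ - 1)).card := by
      rw [polyWeight, Finset.card_filter]
      apply Finset.sum_congr rfl
      intro x _
      rw [hvC x]
      by_cases hx : (x : ℕ) < k - δ - 1
      · rw [if_neg (not_not_intro hx), hVzero x hx]
        simp
      · rw [if_pos hx, Polynomial.support_C (hVne x hx), Finset.card_singleton]
    rw [h1, fin_card_ge n (k - δ - 1) (by omega)]
    omega
  have hne0 : G.mulVec u₀ ≠ 0 := by
    intro h
    have hx : ¬(((⟨n - 1, by omega⟩ : Fin n) : ℕ) < k - δ - 1) := by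
      simp only
      omega
    have := congrFun h ⟨n - 1, by omega⟩
    rw [hvC] at this
    exact hVne _ hx (by
      have := Polynomial.C_eq_zero.mp this
      exact this)
  -- conclude
  have hmem : n - k + δ + 1 ∈
      {w : ℕ | ∃ u : Fin k → Polynomial F, G.mulVec u ≠ 0 ∧ w = polyWeight (G.mulVec u)} :=
    ⟨u₀, hne0, hweight.symm⟩
  have hpart4 : freeDist G = n - k + δ + 1 := by
    rw [freeDist]
    apply le_antisymm
    · exact Nat.sInf_le hmem
    · apply le_csInf ⟨_, hmem⟩
      rintro w ⟨u, hu, rfl⟩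
      exact hlow u hu
  exact ⟨hsuper, hpart2, hpart3, hpart4⟩
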